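/- Let k be an algebraically closed field of characteristic zero or coprime to d. Two d-linear maps Δ : U^d → S and Θ : V^d → T are symmetrically equivalent if and only if they are isomorphic. -/

import Mathlib

open Function

open Polynomial

section Hensel
variable {A : Type*} [CommRing A]

/-- binomial: `(a+b)^n = a^n + n * a^(n-1) * b + b^2 * w`. -/
lemma binom_aux (a b : A) : ∀ n : ℕ, ∃ w : A,
    (a + b) ^ n = a ^ n + (n : A) * a ^ (n - 1) * b + b ^ 2 * w := by
  intro n
  induction n with
  | zero => exact ⟨0, by simp⟩
  | succ n ih =>
    rcases ih with ⟨w, hw⟩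
    rcases Nat.eq_zero_or_pos n with rfl | hn
    · exact ⟨0, by ring⟩
    · refine ⟨(n : A) * a ^ (n-1) + w * a + w * b, ?_⟩
      have hn1 : n - 1 + 1 = n := Nat.succ_pred_eq_of_pos hn
      have hpow : a * a ^ (n - 1) = a ^ n := by
        rw [← pow_succ', hn1]
      calc (a + b) ^ (n+1) = (a + b) ^ n * (a + b) := by rw [pow_succ]
        _ = (a ^ n + (n : A) * a ^ (n - 1) * b + b ^ 2 * w) * (a + b) := by rw [hw]
        _ = a ^ (n+1) + ((n:A) * (a * a^(n-1)) * b + a ^ n * b)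
              + b ^ 2 * ((n : A) * a ^ (n-1) + w * a + w * b) := by ring
        _ = _ := by rw [hpow]; push_cast; ring

/-- Hensel-style lifting of `d`-th roots along nilpotents. -/
lemma hensel_root {z : A} (hz : IsUnit z) {dd : ℕ} (hdd : IsUnit (dd : A)) (hdd0 : dd ≠ 0) :
    ∀ (n : ℕ) (s : A), IsUnit s → (s ^ dd - z) ^ (2 ^ n) = 0 → ∃ r : A, r ^ dd = z := by
  intro n
  induction n with
  | zero =>
    intro s _ h
    refine ⟨s, ?_⟩
    rw [pow_zero, pow_one] at h
    exact sub_eq_zero.mp h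
  | succ n ih =>
    intro s hs h
    set e := s ^ dd - z with he
    obtain ⟨u, hu⟩ := (hdd.mul (hs.pow (dd - 1))).exists_right_inv
    set s' := s - e * u with hs'
    obtain ⟨w, hw⟩ := binom_aux s (-(e * u)) dd
    have key : s' ^ dd = z + e ^ 2 * (u ^ 2 * w) := by
      have : s' = s + (-(e*u)) := by rw [hs']; ring
      rw [this, hw]
      have h2 : (dd : A) * s ^ (dd - 1) * (-(e*u)) = -e * (((dd:A) * s ^ (dd-1)) * u) := by ring
      rw [h2, hu]
      have : s ^ dd = z + e := by rw [he]; ring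
      rw [this]; ring
    have hnil : (s' ^ dd - z) ^ (2 ^ n) = 0 := by
      rw [key]
      have : z + e ^ 2 * (u ^ 2 * w) - z = e ^ 2 * (u ^ 2 * w) := by ring
      rw [this, mul_pow, ← pow_mul, mul_comm 2 (2^n), ← pow_succ, h, zero_mul]
    have hs'unit : IsUnit s' := by
      have hnil' : IsNilpotent (s' ^ dd - z) := ⟨2 ^ n, hnil⟩
      have : IsUnit (s' ^ dd) := by
        have : s' ^ dd = z * (1 + (hz.unit⁻¹ : Aˣ) * (s' ^ dd - z)) := by
          have hzz : (z : A) * (hz.unit⁻¹ : Aˣ) = 1 := by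
            simp [IsUnit.mul_val_inv]
          calc s' ^ dd = z + (z * (hz.unit⁻¹ : Aˣ)) * (s' ^ dd - z) := by rw [hzz]; ring
            _ = _ := by ring
        rw [this]
        refine hz.mul (IsNilpotent.isUnit_one_add ?_)
        exact (Commute.all _ _).isNilpotent_mul_left hnil'
      exact (isUnit_pow_iff hdd0).mp this
    exact ih s' hs'unit hnil

end Hensel

section Root

variable {k : Type*} [Field k] [IsAlgClosed k]
variable {V : Type*} [AddCommGroup V] [Module k V] [FiniteDimensional k V]

/-- A bijective endomorphism of a finite-dimensional space over an algebraically closed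
field has a `d`-th root which is a polynomial in it, provided `(d : k) ≠ 0`. -/
lemma exists_dth_root (z : Module.End k V) (hz : Function.Bijective z)
    {dd : ℕ} (hdd0 : dd ≠ 0) (hddk : (dd : k) ≠ 0) :
    ∃ p : Polynomial k, (Polynomial.aeval z p) ^ dd = z := by
  classical
  have hint : IsIntegral k z := IsIntegral.of_finite k z
  set f : Polynomial k := minpoly k z with hf
  have hfmonic : f.Monic := minpoly.monic hint
  have hfz : Polynomial.aeval z f = 0 := minpoly.aeval k z
  have hfne : f ≠ 0 := hfmonic.ne_zero
  -- constant coefficient of f is nonzero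
  have hf0 : f.coeff 0 ≠ 0 := by
    intro h0
    have hXdvd : f = Polynomial.X * f.divX := by
      conv_lhs => rw [← Polynomial.X_mul_divX_add f]
      rw [h0, map_zero, add_zero]
    have hq0 : Polynomial.aeval z (f.divX) = 0 := by
      have : z * Polynomial.aeval z (f.divX) = 0 := by
        have := hfz
        rw [hXdvd, map_mul, Polynomial.aeval_X] at this
        exact this
      -- z is injective
      ext v
      have h2 : (z * (Polynomial.aeval z (f.divX))) v = 0 := by rw [this]; rfl
      rw [Module.End.mul_apply] at h2
      simp only [LinearMap.zero_apply]
      exact hz.injective (by simpa using h2)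
    have hdivne : f.divX ≠ 0 := by
      intro h
      rw [hXdvd, h, mul_zero] at hfne
      exact hfne rfl
    have hdivmonic : (f.divX).Monic := by
      have h : (Polynomial.X * f.divX).leadingCoeff = 1 := by rw [← hXdvd]; exact hfmonic
      rw [Polynomial.leadingCoeff_mul, Polynomial.leadingCoeff_X, one_mul] at h
      exact h
    have hlt : f.divX.degree < f.degree := Polynomial.degree_divX_lt hfne
    exact absurd (minpoly.min k z hdivmonic hq0) (not_le.mpr hlt)
  -- choose dd-th roots of all elements of k
  choose μ hμ using fun l : k => IsAlgClosed.exists_pow_nat_eq l (Nat.pos_of_ne_zero hdd0)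
  set s : Finset k := f.roots.toFinset with hs
  set h : Polynomial k := Lagrange.interpolate s id μ with hh
  set P : Polynomial k := h ^ dd - Polynomial.X with hP
  set m : ℕ := f.natDegree with hm
  -- `f` divides `P ^ m`
  have hnodup : s.val.Nodup := s.nodup
  have hfPm : f ∣ P ^ m := by
    by_cases hP0 : P = 0
    · by_cases hm0 : m = 0
      · have hf1 : f = 1 := hfmonic.natDegree_eq_zero.mp (hm ▸ hm0)
        rw [hf1]
        exact one_dvd _
      · rw [hP0, zero_pow hm0]
        exact dvd_zero f
    · -- every element of s is a root of P
      have hsub : s.val ≤ P.roots := by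
        rw [Multiset.le_iff_count]
        intro a
        by_cases ha : a ∈ s
        · have hcount : s.val.count a = 1 :=
            Multiset.count_eq_one_of_mem hnodup (Finset.mem_val.mpr ha)
          rw [hcount, Multiset.one_le_count_iff_mem, Polynomial.mem_roots hP0]
          have hev : Polynomial.eval a h = μ a :=
            Lagrange.eval_interpolate_at_node μ (Set.injOn_id _) ha
          show Polynomial.eval a P = 0
          rw [hP]
          simp [hev, hμ a]
        · have : s.val.count a = 0 := Multiset.count_eq_zero_of_notMem ha
          rw [this]
          exact Nat.zero_le _
      have hgP : (s.val.map (fun a => Polynomial.X - Polynomial.C a)).prod ∣ P :=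
        (Multiset.prod_dvd_prod_of_le (Multiset.map_le_map hsub)).trans
          P.prod_multiset_X_sub_C_dvd
      have hfg : f ∣ ((s.val.map (fun a => Polynomial.X - Polynomial.C a)).prod) ^ m := by
        have h1 : f = (f.roots.map (fun a => Polynomial.X - Polynomial.C a)).prod :=
          (IsAlgClosed.splits f).eq_prod_roots_of_monic hfmonic
        have h2 : f.roots ≤ m • s.val := by
          rw [Multiset.le_iff_count]
          intro a
          rw [Multiset.count_nsmul]
          by_cases ha : a ∈ f.roots
          · have h3 : s.val.count a = 1 :=
              Multiset.count_eq_one_of_mem hnodup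
                (Finset.mem_val.mpr (by rw [hs]; exact Multiset.mem_toFinset.mpr ha))
            rw [h3, mul_one, hm]
            exact le_trans (Multiset.count_le_card a f.roots) (f.card_roots')
          · rw [Multiset.count_eq_zero_of_notMem ha]
            exact Nat.zero_le _
        calc f = (f.roots.map (fun a => Polynomial.X - Polynomial.C a)).prod := h1
          _ ∣ ((m • s.val).map (fun a => Polynomial.X - Polynomial.C a)).prod :=
              Multiset.prod_dvd_prod_of_le (Multiset.map_le_map h2)
          _ = ((s.val.map (fun a => Polynomial.X - Polynomial.C a)).prod) ^ m := by
              rw [Multiset.map_nsmul, Multiset.prod_nsmul]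
      exact hfg.trans (pow_dvd_pow_of_dvd hgP m)
  -- work in `AdjoinRoot f`
  set x : AdjoinRoot f := AdjoinRoot.root f with hx
  have hXdiv : Polynomial.X * f.divX = f - Polynomial.C (f.coeff 0) := by
    have h1 := Polynomial.X_mul_divX_add f
    linear_combination h1
  have hxunit : IsUnit x := by
    refine IsUnit.of_mul_eq_one
      (AdjoinRoot.mk f (Polynomial.C (-(f.coeff 0)⁻¹) * f.divX)) ?_
    have h2 : x * AdjoinRoot.mk f (Polynomial.C (-(f.coeff 0)⁻¹) * f.divX)
        = AdjoinRoot.mk f (Polynomial.C (-(f.coeff 0)⁻¹) * (Polynomial.X * f.divX)) := by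
      rw [hx, ← AdjoinRoot.mk_X (f := f), ← map_mul]
      congr 1
      ring
    rw [h2, hXdiv, mul_sub, map_sub, ← Polynomial.C_mul, map_mul, AdjoinRoot.mk_self,
      mul_zero, zero_sub, AdjoinRoot.mk_C]
    have h3 : -(f.coeff 0)⁻¹ * f.coeff 0 = -1 := by
      field_simp
    rw [h3]
    simp
  have hdunit : IsUnit ((dd : AdjoinRoot f)) := by
    refine IsUnit.of_mul_eq_one (algebraMap k _ ((dd : k)⁻¹)) ?_
    rw [← map_natCast (algebraMap k (AdjoinRoot f)) dd, ← map_mul, mul_inv_cancel₀ hddk,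
      map_one]
  -- the initial approximation
  set s₀ : AdjoinRoot f := AdjoinRoot.mk f h with hs₀
  have hsP : s₀ ^ dd - x = AdjoinRoot.mk f P := by
    rw [hs₀, hx, hP, map_sub, map_pow, AdjoinRoot.mk_X]
  have hPnil : (s₀ ^ dd - x) ^ (2 ^ m) = 0 := by
    rw [hsP, ← map_pow, AdjoinRoot.mk_eq_zero]
    exact hfPm.trans (pow_dvd_pow P (Nat.lt_two_pow_self (n := m)).le)
  have hs₀unit : IsUnit s₀ := by
    have h4 : IsUnit (s₀ ^ dd) := by
      have h5 : s₀ ^ dd = (s₀ ^ dd - x) + x := by ring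
      rw [h5]
      exact IsNilpotent.isUnit_add_right_of_commute ⟨2 ^ m, hPnil⟩ hxunit (Commute.all _ _)
    exact (isUnit_pow_iff hdd0).mp h4
  obtain ⟨r, hr⟩ := hensel_root hxunit hdunit hdd0 m s₀ hs₀unit hPnil
  obtain ⟨p, rfl⟩ := AdjoinRoot.mk_surjective r
  have hdvd : f ∣ p ^ dd - Polynomial.X := by
    rw [← AdjoinRoot.mk_eq_zero, map_sub, map_pow, AdjoinRoot.mk_X]
    rw [hr, hx]
    ring
  obtain ⟨c, hc⟩ := hdvd
  refine ⟨p, ?_⟩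
  have h6 : Polynomial.aeval z (p ^ dd - Polynomial.X) = 0 := by
    rw [hc, map_mul, hfz, zero_mul]
  rw [map_sub, map_pow, Polynomial.aeval_X] at h6
  exact sub_eq_zero.mp h6

end Root

section Slide

open Function

variable {k : Type*} [Field k] {d : ℕ}
variable {V T : Type*} [AddCommGroup V] [Module k V] [AddCommGroup T] [Module k T]
variable (Θ : MultilinearMap k (fun _ : Fin d => V) T)

/-- `x` can be slid between any two distinct slots of `Θ`. -/
def Sl (x : Module.End k V) : Prop :=
  ∀ s t : Fin d, s ≠ t → ∀ (v : Fin d → V) (a b : V),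
    Θ (update (update v s (x a)) t b) = Θ (update (update v s a) t (x b))

variable {Θ}

lemma sl_one : Sl Θ (1 : Module.End k V) := by
  intro s t hst v a b
  simp [Module.End.one_apply]

lemma exists_third (hd : 3 ≤ d) (s t : Fin d) : ∃ l : Fin d, l ≠ s ∧ l ≠ t := by
  obtain ⟨n, hn, hns, hnt⟩ : ∃ n : ℕ, n < d ∧ n ≠ s.val ∧ n ≠ t.val := by
    have hs := s.isLt
    have ht := t.isLt
    by_cases e0 : 0 = s.val ∨ 0 = t.val
    · by_cases e1 : 1 = s.val ∨ 1 = t.val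
      · exact ⟨2, by omega, by omega, by omega⟩
      · exact ⟨1, by omega, by omega, by omega⟩
    · exact ⟨0, by omega, by omega, by omega⟩
  exact ⟨⟨n, hn⟩, Fin.ne_of_val_ne hns, Fin.ne_of_val_ne hnt⟩

lemma sl_algebraMap (c : k) : Sl Θ (algebraMap k (Module.End k V) c) := by
  intro s t hst v a b
  calc Θ (update (update v s ((algebraMap k (Module.End k V) c) a)) t b)
      = Θ (update (update v t b) s (c • a)) := by rw [Function.update_comm hst]; rfl
    _ = c • Θ (update (update v t b) s a) := Θ.map_update_smul _ s c a
    _ = c • Θ (update (update v s a) t b) := by rw [Function.update_comm hst.symm]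
    _ = Θ (update (update v s a) t (c • b)) := (Θ.map_update_smul _ t c b).symm
    _ = Θ (update (update v s a) t ((algebraMap k (Module.End k V) c) b)) := rfl

lemma sl_add {x y : Module.End k V} (hx : Sl Θ x) (hy : Sl Θ y) : Sl Θ (x + y) := by
  intro s t hst v a b
  calc Θ (update (update v s ((x + y) a)) t b)
      = Θ (update (update v t b) s (x a + y a)) := by rw [Function.update_comm hst]; rfl
    _ = Θ (update (update v t b) s (x a)) + Θ (update (update v t b) s (y a)) :=
        Θ.map_update_add _ s _ _
    _ = Θ (update (update v s (x a)) t b) + Θ (update (update v s (y a)) t b) := by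
        rw [show update (update v t b) s (x a) = update (update v s (x a)) t b from
          Function.update_comm hst.symm b (x a) v]
        rw [show update (update v t b) s (y a) = update (update v s (y a)) t b from
          Function.update_comm hst.symm b (y a) v]
    _ = Θ (update (update v s a) t (x b)) + Θ (update (update v s a) t (y b)) := by
        rw [hx s t hst v a b, hy s t hst v a b]
    _ = Θ (update (update v s a) t ((x + y) b)) := by
        rw [show (x + y) b = x b + y b from rfl, Θ.map_update_add]

lemma sl_mul {x y : Module.End k V} (hd : 3 ≤ d) (hx : Sl Θ x) (hy : Sl Θ y) :
    Sl Θ (x * y) := by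
  intro s t hst v a b
  obtain ⟨l, hls, hlt⟩ := exists_third hd s t
  set w : Fin d → V := update v t b with hw
  have e1 : Θ (update (update v s ((x * y) a)) t b)
      = Θ (update (update w s (y a)) l (x (w l))) := by
    have h := hx s l (Ne.symm hls) w (y a) (w l)
    rw [show (update (update w s (x (y a))) l (w l))
        = update (update w s (x (y a))) l ((update w s (x (y a))) l) by
          rw [Function.update_of_ne hls]] at h
    rw [Function.update_eq_self] at h
    rw [← h, hw, Function.update_comm hst]
    rfl
  have e2 : Θ (update (update w s (y a)) l (x (w l)))
      = Θ (update (update (update v l (x (v l))) s a) t (y b)) := by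
    have hwl : x (w l) = x (v l) := by rw [hw, Function.update_of_ne hlt]
    rw [hwl, hw, Function.update_comm hls.symm, Function.update_comm hlt.symm,
      Function.update_comm hst.symm]
    exact hy s t hst (update v l (x (v l))) a b
  have e3 : Θ (update (update (update v l (x (v l))) s a) t (y b))
      = Θ (update (update v s a) t ((x * y) b)) := by
    have h := hx l t hlt (update v s a) (v l) (y b)
    rw [Function.update_comm hls.symm] at h
    rw [h, show (x * y) b = x (y b) from rfl]
    congr 1
    rw [show update (update v s a) l (v l)
        = update (update v s a) l ((update v s a) l) by rw [Function.update_of_ne hls]]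
    rw [Function.update_eq_self]
  rw [e1, e2, e3]

lemma sl_aeval (hd : 3 ≤ d) {z : Module.End k V} (hz : Sl Θ z) (p : Polynomial k) :
    Sl Θ (Polynomial.aeval z p) := by
  induction p using Polynomial.induction_on with
  | C a => rw [Polynomial.aeval_C]; exact sl_algebraMap a
  | add p q hp hq => rw [map_add]; exact sl_add hp hq
  | monomial n a ih =>
    rw [pow_succ, ← mul_assoc, map_mul, Polynomial.aeval_X]
    exact sl_mul hd ih hz

variable (Θ) in
/-- ordered product `C (n-1) * ⋯ * C 1 * C 0` of a family of endomorphisms. -/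
def Qacc (C : Fin d → Module.End k V) : ℕ → Module.End k V
  | 0 => 1
  | n + 1 => if h : n < d then C ⟨n, h⟩ * Qacc C n else Qacc C n

lemma qacc_const (B : Module.End k V) : ∀ n, n ≤ d → Qacc (V := V) (fun _ : Fin d => B) n = B ^ n := by
  intro n
  induction n with
  | zero => intro _; rfl
  | succ n ih =>
    intro hn
    rw [Qacc, dif_pos (by omega : n < d), ih (by omega), pow_succ']

lemma sl_qacc (hd : 3 ≤ d) {C : Fin d → Module.End k V} (hC : ∀ m, Sl Θ (C m)) (n : ℕ) :
    Sl Θ (Qacc C n) := by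
  induction n with
  | zero => exact sl_one
  | succ n ih =>
    rw [Qacc]
    by_cases h : n < d
    · rw [dif_pos h]; exact sl_mul hd (hC _) ih
    · rwa [dif_neg h]

lemma qacc_bij {C : Fin d → Module.End k V} (hC : ∀ m, Function.Bijective (C m)) (n : ℕ) :
    Function.Bijective (Qacc C n) := by
  induction n with
  | zero => exact Function.bijective_id
  | succ n ih =>
    rw [Qacc]
    by_cases h : n < d
    · rw [dif_pos h]
      exact (hC _).comp ih
    · rwa [dif_neg h]

lemma collect_aux (hd1 : 1 ≤ d) {C : Fin d → Module.End k V} (hC : ∀ m, Sl Θ (C m))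
    (v : Fin d → V) :
    ∀ n, 1 ≤ n → n ≤ d →
      Θ (update (fun m => if m.val < n then v m else C m (v m)) ⟨0, by omega⟩
        (Qacc C n (v ⟨0, by omega⟩))) = Θ (fun m => C m (v m)) := by
  set i0 : Fin d := ⟨0, by omega⟩ with hi0
  intro n
  induction n with
  | zero => omega
  | succ n ih =>
    intro _ hnd
    by_cases hn1 : n = 0
    · subst hn1
      congr 1
      funext m
      by_cases hm : m = i0
      · subst hm
        rw [Function.update_self, Qacc, dif_pos (by omega : 0 < d)]
        show (C i0 * Qacc C 0) (v i0) = C i0 (v i0)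
        rw [Qacc]
        simp
      · rw [Function.update_of_ne hm]
        have hmv : m.val ≠ 0 := fun h => hm (by rw [hi0]; exact Fin.ext h)
        rw [if_neg (by omega)]
    · -- n ≥ 1
      have hn : n < d := by omega
      set iN : Fin d := ⟨n, hn⟩ with hiN
      have hiN0 : iN ≠ i0 := by
        intro h
        have := congrArg Fin.val h
        simp [hiN, hi0] at this
        omega
      have key := (hC iN) i0 iN (fun h => hiN0 h.symm)
        (fun m => if m.val < n then v m else C m (v m)) (Qacc C n (v i0)) (v iN)
      have e1 : update (fun m => if m.val < n + 1 then v m else C m (v m)) i0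
            (Qacc C (n+1) (v i0))
          = update (update (fun m => if m.val < n then v m else C m (v m)) i0
            ((C iN) (Qacc C n (v i0)))) iN (v iN) := by
        funext m
        by_cases hm0 : m = i0
        · subst hm0
          rw [Function.update_self, Function.update_of_ne hiN0.symm, Function.update_self,
            Qacc, dif_pos hn]
          rfl
        · by_cases hmN : m = iN
          · subst hmN
            rw [Function.update_of_ne hm0, Function.update_self, if_pos (by omega : n < n+1)]
          · have hmval : m.val ≠ n := fun h => hmN (Fin.ext h)
            rw [Function.update_of_ne hm0, Function.update_of_ne hmN,
              Function.update_of_ne hm0]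
            by_cases hlt : m.val < n
            · rw [if_pos (by omega), if_pos hlt]
            · rw [if_neg (by omega), if_neg hlt]
      have e2 : update (update (fun m => if m.val < n then v m else C m (v m)) i0
            (Qacc C n (v i0))) iN ((C iN) (v iN))
          = update (fun m => if m.val < n then v m else C m (v m)) i0 (Qacc C n (v i0)) := by
        have hval : (C iN) (v iN)
            = (update (fun m => if m.val < n then v m else C m (v m)) i0
              (Qacc C n (v i0))) iN := by
          rw [Function.update_of_ne hiN0, if_neg (by omega : ¬ (n < n))]
        rw [hval, Function.update_eq_self]
      rw [e1, key, e2]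
      exact ih (by omega) (by omega)

lemma collect (hd1 : 1 ≤ d) {C : Fin d → Module.End k V} (hC : ∀ m, Sl Θ (C m))
    (v : Fin d → V) :
    Θ (fun m => C m (v m))
      = Θ (update v ⟨0, by omega⟩ (Qacc C d (v ⟨0, by omega⟩))) := by
  have h := collect_aux hd1 hC v d hd1 le_rfl
  have e : (fun m : Fin d => if m.val < d then v m else C m (v m)) = v := by
    funext m
    rw [if_pos m.isLt]
  rw [e] at h
  exact h.symm

end Slide

section Main

open Function

variable {k : Type*} [Field k] {d : ℕ}
variable {U V S T : Type*} [AddCommGroup U] [Module k U] [AddCommGroup V] [Module k V]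
variable [AddCommGroup S] [Module k S] [AddCommGroup T] [Module k T]

lemma sl_A (hd : 3 ≤ d) (φ : Fin d → (U ≃ₗ[k] V)) (ψ : S ≃ₗ[k] T)
    (Δ : MultilinearMap k (fun _ : Fin d => U) S)
    (Θ : MultilinearMap k (fun _ : Fin d => V) T)
    (H : ∀ (σ : Equiv.Perm (Fin d)) (u : Fin d → U),
      ψ (Δ u) = Θ (fun m => φ (σ m) (u m)))
    (l : Fin d) :
    Sl Θ ((φ ⟨0, by omega⟩).symm.trans (φ l)).toLinearMap := by
  set i0 : Fin d := ⟨0, by omega⟩ with hi0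
  intro s t hst v a b
  by_cases hl : l = i0
  · subst hl
    simp [LinearEquiv.trans_apply]
  · set α : Fin d := Equiv.swap s i0 t with hα
    have hα0 : α ≠ i0 := by
      rw [hα]
      intro h
      have h2 : (Equiv.swap s i0) t = (Equiv.swap s i0) s :=
        h.trans (Equiv.swap_apply_left s i0).symm
      exact hst ((Equiv.swap s i0).injective h2).symm
    set σ₂ : Equiv.Perm (Fin d) := (Equiv.swap s i0).trans (Equiv.swap α l) with hσ₂
    set σ₁ : Equiv.Perm (Fin d) := (Equiv.swap s t).trans σ₂ with hσ₁
    have hσ₂s : σ₂ s = i0 := by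
      rw [hσ₂, Equiv.trans_apply, Equiv.swap_apply_left]
      exact Equiv.swap_apply_of_ne_of_ne (Ne.symm hα0) (fun h => hl h.symm)
    have hσ₂t : σ₂ t = l := by
      rw [hσ₂, Equiv.trans_apply, ← hα, Equiv.swap_apply_left]
    have hσ₁s : σ₁ s = l := by
      rw [hσ₁, Equiv.trans_apply, Equiv.swap_apply_left, hσ₂t]
    have hσ₁t : σ₁ t = i0 := by
      rw [hσ₁, Equiv.trans_apply, Equiv.swap_apply_right, hσ₂s]
    have hσm : ∀ m, m ≠ s → m ≠ t → σ₁ m = σ₂ m := by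
      intro m hms hmt
      rw [hσ₁, Equiv.trans_apply, Equiv.swap_apply_of_ne_of_ne hms hmt]
    set u : Fin d → U := fun m =>
      if m = s then (φ i0).symm a else if m = t then (φ i0).symm b
      else (φ (σ₂ m)).symm (v m) with hu
    have h12 : Θ (fun m => φ (σ₁ m) (u m)) = Θ (fun m => φ (σ₂ m) (u m)) := by
      rw [← H σ₁ u, ← H σ₂ u]
    have e1 : (fun m => φ (σ₁ m) (u m))
        = update (update v s (((φ i0).symm.trans (φ l)).toLinearMap a)) t b := by
      funext m
      by_cases hms : m = s
      · subst hms
        rw [Function.update_of_ne hst, Function.update_self, hσ₁s, hu]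
        simp only [if_pos rfl]
        rfl
      · by_cases hmt : m = t
        · subst hmt
          rw [Function.update_self, hσ₁t, hu]
          simp only [if_neg hms, if_pos rfl]
          exact (φ i0).apply_symm_apply b
        · rw [Function.update_of_ne hmt, Function.update_of_ne hms, hσm m hms hmt, hu]
          simp only [if_neg hms, if_neg hmt]
          exact (φ (σ₂ m)).apply_symm_apply (v m)
    have e2 : (fun m => φ (σ₂ m) (u m))
        = update (update v s a) t (((φ i0).symm.trans (φ l)).toLinearMap b) := by
      funext m
      by_cases hms : m = s
      · subst hms
        rw [Function.update_of_ne hst, Function.update_self, hσ₂s, hu]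
        simp only [if_pos rfl]
        exact (φ i0).apply_symm_apply a
      · by_cases hmt : m = t
        · subst hmt
          rw [Function.update_self, hσ₂t, hu]
          simp only [if_neg hms, if_pos rfl]
          rfl
        · rw [Function.update_of_ne hmt, Function.update_of_ne hms, hu]
          simp only [if_neg hms, if_neg hmt]
          exact (φ (σ₂ m)).apply_symm_apply (v m)
    rw [← e1, ← e2, h12]

end Main


/-- The center condition: `φ` is self-adjoint with respect to the multilinear map `Θ`
in every pair of slots. -/
def InCenter {k : Type*} [Field k] {d : ℕ} {V T : Type*} [AddCommGroup V] [Module k V]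
    [AddCommGroup T] [Module k T]
    (Θ : MultilinearMap k (fun _ : Fin d => V) T) (φ : V →ₗ[k] V) : Prop :=
  ∀ (i j : Fin d) (v : Fin d → V),
    Θ (Function.update v i (φ (v i))) = Θ (Function.update v j (φ (v j)))

/-- Nondegeneracy of a multilinear map: the only vector annihilating it in some slot
against all others is `0`. -/
def Nondeg {k : Type*} [Field k] {d : ℕ} {V T : Type*} [AddCommGroup V] [Module k V]
    [AddCommGroup T] [Module k T]
    (Θ : MultilinearMap k (fun _ : Fin d => V) T) : Prop :=
  ∀ u : V, (∀ (i : Fin d) (v : Fin d → V), Θ (Function.update v i u) = 0) → u = 0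

/-- over an algebraically closed field of characteristic zero or coprime
to `d`, two `d`-linear maps are symmetrically equivalent iff they are isomorphic. -/
theorem symEquiv_iff_iso_of_algClosed {k : Type*} [Field k] [IsAlgClosed k]
    {d : ℕ} (hd : 3 ≤ d) (hchar : ringChar k = 0 ∨ (ringChar k).Coprime d)
    {U V S T : Type*} [AddCommGroup U] [Module k U] [FiniteDimensional k U]
    [AddCommGroup V] [Module k V] [FiniteDimensional k V]
    [AddCommGroup S] [Module k S] [FiniteDimensional k S]
    [AddCommGroup T] [Module k T] [FiniteDimensional k T]
    (Δ : MultilinearMap k (fun _ : Fin d => U) S)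
    (Θ : MultilinearMap k (fun _ : Fin d => V) T) :
    (∃ (φ : Fin d → (U ≃ₗ[k] V)) (ψ : S ≃ₗ[k] T),
      ∀ (σ : Equiv.Perm (Fin d)) (u : Fin d → U),
        ψ (Δ u) = Θ (fun m => φ (σ m) (u m))) ↔
    (∃ (φ : U ≃ₗ[k] V) (ψ : S ≃ₗ[k] T),
      ∀ u : Fin d → U, ψ (Δ u) = Θ (fun m => φ (u m))) := by
  constructor
  · rintro ⟨φ, ψ, H⟩
    have hd0 : d ≠ 0 := by omega
    -- (d : k) ≠ 0
    have hdk : (d : k) ≠ 0 := by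
      intro h
      haveI := ringChar.charP k
      have hdvd : ringChar k ∣ d := (CharP.cast_eq_zero_iff k (ringChar k) d).mp h
      rcases hchar with h0 | hcop
      · rw [h0] at hdvd
        exact hd0 (zero_dvd_iff.mp hdvd)
      · have h1 : ringChar k = 1 :=
          Nat.dvd_one.mp (hcop ▸ Nat.dvd_gcd dvd_rfl hdvd)
        exact CharP.ringChar_ne_one h1
    set i0 : Fin d := ⟨0, by omega⟩ with hi0
    set A : Fin d → Module.End k V :=
      fun l => ((φ i0).symm.trans (φ l)).toLinearMap with hA
    have slA : ∀ l, Sl Θ (A l) := fun l => sl_A hd φ ψ Δ Θ H l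
    set Zop : Module.End k V := Qacc A d with hZop
    have hZsl : Sl Θ Zop := sl_qacc hd slA d
    have hZbij : Function.Bijective Zop :=
      qacc_bij (fun m => ((φ i0).symm.trans (φ m)).bijective) d
    obtain ⟨p, hp⟩ := exists_dth_root Zop hZbij hd0 hdk
    set r : Module.End k V := Polynomial.aeval Zop p with hr
    have hrsl : Sl Θ r := sl_aeval hd hZsl p
    have hrbij : Function.Bijective r := by
      constructor
      · intro x y hxy
        have h1 : Zop x = Zop y := by
          rw [← hp, show d = (d-1)+1 from by omega, pow_succ,
            Module.End.mul_apply, Module.End.mul_apply, hxy]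
        exact hZbij.injective h1
      · intro y
        obtain ⟨x, hx⟩ := hZbij.surjective y
        refine ⟨(r ^ (d-1)) x, ?_⟩
        have h2 : (r * r ^ (d-1)) x = y := by
          have h3 : r * r ^ (d-1) = Zop := by
            rw [← pow_succ', show d - 1 + 1 = d from by omega, hp]
          rw [h3]
          exact hx
        exact h2
    set req : V ≃ₗ[k] V := LinearEquiv.ofBijective r hrbij with hreq
    refine ⟨(φ i0).trans req, ψ, ?_⟩
    intro u
    set v : Fin d → V := fun m => φ i0 (u m) with hv
    have h1 : ψ (Δ u) = Θ (fun m => A m (v m)) := by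
      rw [H 1 u]
      congr 1
      funext m
      rw [hA, hv]
      show φ m (u m) = ((φ i0).symm.trans (φ m)) (φ i0 (u m))
      rw [LinearEquiv.trans_apply, LinearEquiv.symm_apply_apply]
    have h2 := collect (Θ := Θ) (by omega) slA v
    have h3 := collect (Θ := Θ) (by omega) (fun _ : Fin d => hrsl) v
    have h4 : Qacc (fun _ : Fin d => r) d = r ^ d := qacc_const r d le_rfl
    have h5 : Θ (fun m => r (v m)) = ψ (Δ u) := by
      rw [h3, h4, hp, ← h2, h1]
    have h6 : (fun m => ((φ i0).trans req) (u m)) = fun m => r (v m) := by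
      funext m
      rw [LinearEquiv.trans_apply]
      rfl
    rw [h6, h5]
  · rintro ⟨φ, ψ, H⟩
    exact ⟨fun _ => φ, ψ, fun σ u => H u⟩
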